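/- Let $\mu = 1/8$ and define $\tau(v,r) = (v - 2r)\,e^{2r/(v-2r)}$ on the open set where $v \neq 2r$. Then $\tau$ satisfies the linear first-order PDE $r\,\frac{\partial \tau}{\partial v} + (r - 2\mu v)\,\frac{\partial \tau}{\partial r} = 0$, i.e., $r\,\partial_v \tau + \left(r - \frac{v}{4}\right)\partial_r \tau = 0$. -/

import Mathlib

/-- In the self-similar Vaidya spacetime with `μ = 1/8`, the Kodama-time function
`τ(v,r) = (v-2r) e^{2r/(v-2r)}` satisfies `r ∂_v τ + (r - v/4) ∂_r τ = 0` where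
`v ≠ 2r`. -/
theorem stmt15 (τ : ℝ → ℝ → ℝ)
    (hτ : τ = fun v r => (v - 2*r) * Real.exp (2*r/(v - 2*r))) :
    ∀ v r : ℝ, v ≠ 2*r →
      r * deriv (fun v' => τ v' r) v + (r - v/4) * deriv (fun r' => τ v r') r = 0 := by
  subst hτ
  intro v r hvr
  have hs : v - 2*r ≠ 0 := sub_ne_zero.mpr hvr
  -- derivative in v
  have h1 : HasDerivAt (fun v' : ℝ => v' - 2*r) 1 v := (hasDerivAt_id v).sub_const _
  have h2 : HasDerivAt (fun v' : ℝ => 2*r/(v' - 2*r))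
      ((0 * (v - 2*r) - 2*r*1)/(v - 2*r)^2) v :=
    (hasDerivAt_const v (2*r)).div h1 hs
  have h3 := h2.exp
  have hv : HasDerivAt (fun v' : ℝ => (v' - 2*r) * Real.exp (2*r/(v' - 2*r)))
      (1 * Real.exp (2*r/(v - 2*r)) +
        (v - 2*r) * (Real.exp (2*r/(v - 2*r)) * ((0 * (v - 2*r) - 2*r*1)/(v - 2*r)^2))) v :=
    h1.mul h3
  -- derivative in r
  have g1 : HasDerivAt (fun r' : ℝ => v - 2*r') (0 - 2*1) r :=
    (hasDerivAt_const r v).sub ((hasDerivAt_id r).const_mul 2)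
  have g2 : HasDerivAt (fun r' : ℝ => 2*r') (2*1) r := (hasDerivAt_id r).const_mul 2
  have g3 : HasDerivAt (fun r' : ℝ => 2*r'/(v - 2*r'))
      ((2*1 * (v - 2*r) - 2*r*(0 - 2*1))/(v - 2*r)^2) r := g2.div g1 hs
  have g4 := g3.exp
  have hr : HasDerivAt (fun r' : ℝ => (v - 2*r') * Real.exp (2*r'/(v - 2*r')))
      ((0 - 2*1) * Real.exp (2*r/(v - 2*r)) +
        (v - 2*r) * (Real.exp (2*r/(v - 2*r)) *
          ((2*1 * (v - 2*r) - 2*r*(0 - 2*1))/(v - 2*r)^2))) r :=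
    g1.mul g4
  rw [hv.deriv, hr.deriv]
  field_simp
  have hw : (-(r*2)+v)⁻¹ * (v - 2*r) = 1 := by
    rw [show -(r*2)+v = v-2*r by ring]; exact inv_mul_cancel₀ hs
  linear_combination (norm := ring_nf) (-2 * (v-2*r) * Real.exp (r * (-(r * 2) + v)⁻¹ * 2)) * hw
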